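/- For ω ∈ (0,π), a primary grasped circle exists if and only if ρ < 2 + tan(ω(J_ω−1)/2)·cot(ω/2). Equivalently, with r the inradius of the triangle formed by the relevant phalanx lines, the condition |x_{J_ω} − C_{J_ω}| = (1/ρ^{J_ω})·tan(ω/2)/(tan(ω/2)+tan((J_ω−1)ω/2)) < 1/(ρ^{J_ω}(ρ−1)) holds if and only if ρ < 2 + tan(ω(J_ω−1)/2)·cot(ω/2). -/

import Mathlib

open Real

/-- Representative of `x` modulo `2π` in `[0, 2π)`. -/
noncomputable def rep (x : ℝ) : ℝ := x - 2 * π * (⌊x / (2 * π)⌋ : ℝ)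

lemma rep_eq_self {x : ℝ} (h0 : 0 ≤ x) (h1 : x < 2 * π) : rep x = x := by
  have h2π : (0:ℝ) < 2 * π := by positivity
  have : ⌊x / (2 * π)⌋ = 0 := by
    rw [Int.floor_eq_zero_iff]
    constructor
    · exact div_nonneg h0 h2π.le
    · exact (div_lt_one h2π).mpr h1
  simp [rep, this]

theorem primary_grasped_circle_condition (ρ ω : ℝ) (hρ : 1 < ρ) (hω : ω ∈ Set.Ioo 0 π)
    (J : ℕ)
    (hJ : IsLeast {J : ℕ | 0 < J ∧ rep (ω * ((J : ℝ) - 1)) < π ∧ π ≤ rep (ω * J)} J) :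
    (1 / ρ ^ J) * Real.tan (ω / 2) / (Real.tan (ω / 2) + Real.tan (((J : ℝ) - 1) * ω / 2))
        < 1 / (ρ ^ J * (ρ - 1))
      ↔ ρ < 2 + Real.tan (ω * ((J : ℝ) - 1) / 2) * (Real.tan (ω / 2))⁻¹ := by
  obtain ⟨hω0, hωπ⟩ := hω
  have πpos := Real.pi_pos
  have hJ0 : 0 < J := hJ.1.1
  -- main induction: ω * k < π for all k < J
  have main : ∀ k : ℕ, k < J → ω * k < π := by
    intro k
    induction k with
    | zero => intro _; simpa using πpos
    | succ n ih =>
      intro hn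
      have h1 : ω * n < π := ih (by omega)
      have h2 : 0 ≤ ω * n := by positivity
      have hrepn : rep (ω * n) = ω * n := rep_eq_self h2 (by linarith)
      have hnotmem : (n + 1) ∉ {J : ℕ | 0 < J ∧ rep (ω * ((J : ℝ) - 1)) < π ∧ π ≤ rep (ω * J)} :=
        fun hmem => absurd (hJ.2 hmem) (by omega)
      have hcast : ω * (((n + 1 : ℕ) : ℝ) - 1) = ω * n := by push_cast; ring
      have hlt : rep (ω * ((n + 1 : ℕ) : ℝ)) < π := by
        by_contra hge
        exact hnotmem ⟨Nat.succ_pos n, by rw [hcast, hrepn]; exact h1, not_lt.mp hge⟩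
      have harg0 : (0:ℝ) ≤ ω * ((n + 1 : ℕ) : ℝ) := by positivity
      have harg1 : ω * ((n + 1 : ℕ) : ℝ) < 2 * π := by push_cast; nlinarith
      rw [rep_eq_self harg0 harg1] at hlt
      exact hlt
  have hJm1 : ω * ((J : ℝ) - 1) < π := by
    have := main (J - 1) (by omega)
    rw [Nat.cast_sub hJ0] at this
    simpa using this
  have hJm1' : 0 ≤ ω * ((J : ℝ) - 1) := by
    have : (1:ℝ) ≤ (J : ℝ) := by exact_mod_cast hJ0
    nlinarith
  -- tangent facts
  set t := Real.tan (ω / 2) with ht_def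
  set s := Real.tan (ω * ((J : ℝ) - 1) / 2) with hs_def
  have ht : 0 < t := Real.tan_pos_of_pos_of_lt_pi_div_two (by linarith) (by linarith)
  have hs : 0 ≤ s :=
    Real.tan_nonneg_of_nonneg_of_le_pi_div_two (by linarith) (by linarith)
  have hts : 0 < t + s := by linarith
  have hρpow : (0:ℝ) < ρ ^ J := by positivity
  have hcomm : ((J : ℝ) - 1) * ω / 2 = ω * ((J : ℝ) - 1) / 2 := by ring
  rw [hcomm, ← hs_def]
  rw [div_lt_div_iff₀ hts (mul_pos hρpow (by linarith : (0:ℝ) < ρ - 1)),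
    show 1 / ρ ^ J * t * (ρ ^ J * (ρ - 1)) = t * (ρ - 1) from by
      field_simp, one_mul]
  have e : s * t⁻¹ * t = s := by field_simp
  constructor
  · intro h
    nlinarith [h, ht, hρpow, e, mul_pos hρpow ht]
  · intro h
    nlinarith [h, ht, hρpow, e, mul_pos hρpow ht, mul_pos hρpow hts]
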